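/- arXiv:2108.03024 — 4 statements merged into one kernel-verified Lean document; each statement's English description precedes it below -/
import Mathlib

section
/- Let S be a circular sequence of length T ≥ 1 over a finite symbol set A with weight function w : A → ℕ, w(a) ≥ 1 for all a, and frequencies f : A → ℕ with f(a) ≥ 1 for all a. Suppose S is feasible and obj(S) < z* for an integer z*. Then for every symbol a, the set N_a = {k ∈ ℕ : k ≥ f(a) and w(a) · ⌈T / k⌉ < z*} is nonempty, and count_a(S) ≥ min N_a. -/
variable {A : Type*}

/-- The circular gap of sequence `S` at position `t` for symbol `a`:
the least positive `d` with `S ((t + d) % T) = a`. -/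
noncomputable def gap {T : ℕ} (S : Fin T → A) (a : A) (t : Fin T) : ℕ :=
  sInf {d : ℕ | 0 < d ∧ S ⟨(t.val + d) % T, Nat.mod_lt _ t.pos⟩ = a}

/-- Number of positions where symbol `a` occurs in `S`. -/
def count {T : ℕ} [DecidableEq A] (S : Fin T → A) (a : A) : ℕ :=
  (Finset.univ.filter fun t => S t = a).card

/-- `D_a(S)`: the maximum gap of symbol `a` over its positions in `S`. -/
noncomputable def Dmax {T : ℕ} [DecidableEq A] (S : Fin T → A) (a : A) : ℕ :=
  (Finset.univ.filter fun t => S t = a).sup (gap S a)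

/-- Objective value: max over occurring symbols of weight times maximum gap. -/
noncomputable def obj {T : ℕ} [Fintype A] [DecidableEq A] (w : A → ℕ) (S : Fin T → A) : ℕ :=
  (Finset.univ.filter fun a => 1 ≤ count S a).sup fun a => w a * Dmax S a

section Aux

variable {T : ℕ}

lemma mod_add_cancel {x y d : ℕ} (hx : x < T) (hy : y < T)
    (h : (x + d) % T = (y + d) % T) : x = y := by
  have h2 : x ≡ y [MOD T] := Nat.ModEq.add_right_cancel' d h
  unfold Nat.ModEq at h2
  rwa [Nat.mod_eq_of_lt hx, Nat.mod_eq_of_lt hy] at h2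

variable (S : Fin T → A) (a : A)

lemma gap_T_mem (t : Fin T) (ht : S t = a) :
    T ∈ {d : ℕ | 0 < d ∧ S ⟨(t.val + d) % T, Nat.mod_lt _ t.pos⟩ = a} := by
  refine ⟨t.pos, ?_⟩
  have h : (⟨(t.val + T) % T, Nat.mod_lt _ t.pos⟩ : Fin T) = t :=
    Fin.ext (by simp [Nat.add_mod_right, Nat.mod_eq_of_lt t.isLt])
  rw [h]; exact ht

lemma gap_mem (t : Fin T) (ht : S t = a) :
    0 < gap S a t ∧ S ⟨(t.val + gap S a t) % T, Nat.mod_lt _ t.pos⟩ = a :=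
  Nat.sInf_mem ⟨T, gap_T_mem S a t ht⟩

lemma gap_min (t : Fin T) {d : ℕ} (hd : 0 < d) (hlt : d < gap S a t) :
    S ⟨(t.val + d) % T, Nat.mod_lt _ t.pos⟩ ≠ a :=
  fun h => Nat.notMem_of_lt_sInf hlt ⟨hd, h⟩

/-- forward distance from `s` to the next occurrence of `a`. -/
noncomputable def nd (s : Fin T) : ℕ :=
  sInf {d : ℕ | S ⟨(s.val + d) % T, Nat.mod_lt _ s.pos⟩ = a}

lemma nd_mem (s : Fin T) (t0 : Fin T) (ht0 : S t0 = a) :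
    S ⟨(s.val + nd S a s) % T, Nat.mod_lt _ s.pos⟩ = a := by
  apply Nat.sInf_mem (s := {d : ℕ | S ⟨(s.val + d) % T, Nat.mod_lt _ s.pos⟩ = a})
  refine ⟨T + t0.val - s.val, ?_⟩
  have h1 : s.val + (T + t0.val - s.val) = T + t0.val := by
    have := s.isLt; omega
  have h : (⟨(s.val + (T + t0.val - s.val)) % T, Nat.mod_lt _ s.pos⟩ : Fin T) = t0 :=
    Fin.ext (by simp [h1, Nat.add_mod_left, Nat.mod_eq_of_lt t0.isLt])
  show S _ = a
  rw [h]; exact ht0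

lemma nd_min (s : Fin T) {d : ℕ} (hlt : d < nd S a s) :
    S ⟨(s.val + d) % T, Nat.mod_lt _ s.pos⟩ ≠ a :=
  fun h => Nat.notMem_of_lt_sInf hlt h

lemma succ_inj_aux {p1 p2 : Fin T} (h1 : S p1 = a) (h2 : S p2 = a)
    (hg : gap S a p1 < gap S a p2)
    (h : (p1.val + gap S a p1) % T = (p2.val + gap S a p2) % T) : False := by
  set g1 := gap S a p1
  set g2 := gap S a p2
  have key : (p2.val + (g2 - g1)) % T = p1.val := by
    have e : p2.val + g2 = (p2.val + (g2 - g1)) + g1 := by omega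
    rw [e] at h
    have h3 : p1.val ≡ p2.val + (g2 - g1) [MOD T] := Nat.ModEq.add_right_cancel' g1 h
    unfold Nat.ModEq at h3
    rw [Nat.mod_eq_of_lt p1.isLt] at h3
    exact h3.symm
  have hg1 : 0 < g1 := (gap_mem S a p1 h1).1
  apply gap_min S a p2 (d := g2 - g1) (by omega) (by omega)
  have hfin : (⟨(p2.val + (g2 - g1)) % T, Nat.mod_lt _ p2.pos⟩ : Fin T) = p1 :=
    Fin.ext key
  rw [hfin]; exact h1

lemma succ_inj {p1 p2 : Fin T} (h1 : S p1 = a) (h2 : S p2 = a)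
    (h : (p1.val + gap S a p1) % T = (p2.val + gap S a p2) % T) : p1 = p2 := by
  rcases lt_trichotomy (gap S a p1) (gap S a p2) with hg | hg | hg
  · exact absurd h (fun h => succ_inj_aux S a h1 h2 hg h)
  · rw [hg] at h
    exact Fin.ext (mod_add_cancel p1.isLt p2.isLt h)
  · exact absurd h.symm (fun h => succ_inj_aux S a h2 h1 hg h)

end Aux
section Aux2

variable {T : ℕ} [DecidableEq A] (S : Fin T → A) (a : A)

lemma succ_surj {t : Fin T} (ht : S t = a) :
    ∃ p : Fin T, S p = a ∧ (p.val + gap S a p) % T = t.val := by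
  classical
  set occ := Finset.univ.filter fun u => S u = a with hocc
  have htocc : t ∈ occ := by simp [hocc, ht]
  set F : Fin T → Fin T := fun p => ⟨(p.val + gap S a p) % T, Nat.mod_lt _ p.pos⟩ with hF
  have hmaps : ∀ p ∈ occ, F p ∈ occ := by
    intro p hp
    have hpa : S p = a := by simpa [hocc] using hp
    simp only [hocc, Finset.mem_filter, Finset.mem_univ, true_and]
    exact (gap_mem S a p hpa).2
  have hinj : Set.InjOn F occ := by
    intro p1 hp1 p2 hp2 hEq
    have h1 : S p1 = a := by simpa [hocc] using hp1
    have h2 : S p2 = a := by simpa [hocc] using hp2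
    exact succ_inj S a h1 h2 (congrArg Fin.val hEq)
  have himg : occ.image F ⊆ occ := by
    intro x hx
    obtain ⟨p, hp, rfl⟩ := Finset.mem_image.mp hx
    exact hmaps p hp
  have hcard : occ.card ≤ (occ.image F).card := by
    rw [Finset.card_image_of_injOn hinj]
  have heq : occ.image F = occ := Finset.eq_of_subset_of_card_le himg hcard
  have : t ∈ occ.image F := by rw [heq]; exact htocc
  obtain ⟨p, hp, hpt⟩ := Finset.mem_image.mp this
  exact ⟨p, by simpa [hocc] using hp, congrArg Fin.val hpt⟩

lemma nd_lt_Dmax {t0 : Fin T} (ht0 : S t0 = a) (s : Fin T) :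
    nd S a s < Dmax S a := by
  have hta : S ⟨(s.val + nd S a s) % T, Nat.mod_lt _ s.pos⟩ = a := nd_mem S a s t0 ht0
  obtain ⟨p, hpa, hpt⟩ := succ_surj S a hta
  have hg0 : 0 < gap S a p := (gap_mem S a p hpa).1
  have hlt : nd S a s < gap S a p := by
    by_contra hge
    push_neg at hge
    have e : s.val + nd S a s = (s.val + (nd S a s - gap S a p)) + gap S a p := by omega
    have hmod : (p.val + gap S a p) % T = ((s.val + (nd S a s - gap S a p)) + gap S a p) % T := by
      rw [hpt]; rw [← e]
    have h3 : p.val ≡ s.val + (nd S a s - gap S a p) [MOD T] :=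
      Nat.ModEq.add_right_cancel' _ hmod
    unfold Nat.ModEq at h3
    rw [Nat.mod_eq_of_lt p.isLt] at h3
    apply nd_min S a s (d := nd S a s - gap S a p) (by omega)
    have hfin : (⟨(s.val + (nd S a s - gap S a p)) % T, Nat.mod_lt _ s.pos⟩ : Fin T) = p :=
      Fin.ext h3.symm
    rw [hfin]; exact hpa
  exact lt_of_lt_of_le hlt (Finset.le_sup (by simp [hpa]))

lemma T_le_count_mul_Dmax {t0 : Fin T} (ht0 : S t0 = a) :
    T ≤ count S a * Dmax S a := by
  classical
  set occ := Finset.univ.filter fun u => S u = a with hocc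
  have hcard : (Finset.univ : Finset (Fin T)).card ≤ (occ ×ˢ Finset.range (Dmax S a)).card := by
    apply Finset.card_le_card_of_injOn
      (fun s => (⟨(s.val + nd S a s) % T, Nat.mod_lt _ s.pos⟩, nd S a s))
    · intro s _
      simp only [Finset.mem_coe, Finset.mem_product, Finset.mem_range]
      constructor
      · simp only [hocc, Finset.mem_filter, Finset.mem_univ, true_and]
        exact nd_mem S a s t0 ht0
      · exact nd_lt_Dmax S a ht0 s
    · intro s1 _ s2 _ hEq
      simp only [Prod.mk.injEq] at hEq
      obtain ⟨hfst, hsnd⟩ := hEq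
      have hv : (s1.val + nd S a s1) % T = (s2.val + nd S a s2) % T := congrArg Fin.val hfst
      rw [hsnd] at hv
      exact Fin.ext (mod_add_cancel s1.isLt s2.isLt hv)
  simpa [count, Finset.card_univ, Finset.card_product] using hcard

end Aux2

/-- lifting of the minimum number of occurrences, given an upper
bound `z*` on the objective value of the feasible sequence `S`. -/
theorem count_ge_min_lifted {T : ℕ} [Fintype A] [DecidableEq A] (hT : 1 ≤ T)
    (S : Fin T → A) (w f : A → ℕ) (hw : ∀ a, 1 ≤ w a) (hf : ∀ a, 1 ≤ f a)
    (hfeas : ∀ a, f a ≤ count S a) (zstar : ℤ)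
    (hobj : (obj w S : ℤ) < zstar) :
    ∀ a : A,
      {k : ℕ | f a ≤ k ∧ ((w a * ((T + k - 1) / k) : ℕ) : ℤ) < zstar}.Nonempty ∧
      sInf {k : ℕ | f a ≤ k ∧ ((w a * ((T + k - 1) / k) : ℕ) : ℤ) < zstar}
        ≤ count S a := by
  intro a
  set k := count S a with hk
  have hk1 : 1 ≤ k := le_trans (hf a) (hfeas a)
  -- a occurs somewhere
  have hex : ∃ t0 : Fin T, S t0 = a := by
    have : (Finset.univ.filter fun t => S t = a).Nonempty := by
      rw [← Finset.card_pos]; exact hk1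
    obtain ⟨t0, ht0⟩ := this
    exact ⟨t0, (Finset.mem_filter.mp ht0).2⟩
  obtain ⟨t0, ht0⟩ := hex
  have hTle : T ≤ k * Dmax S a := T_le_count_mul_Dmax S a ht0
  have hceil : (T + k - 1) / k ≤ Dmax S a := by
    apply Nat.lt_succ_iff.mp
    rw [Nat.div_lt_iff_lt_mul (by omega : 0 < k)]
    have hexp : (Dmax S a).succ * k = k * Dmax S a + k := by rw [Nat.succ_mul]; ring
    omega
  have hle_obj : w a * Dmax S a ≤ obj w S := by
    unfold obj
    exact Finset.le_sup (f := fun a => w a * Dmax S a) (Finset.mem_filter.mpr ⟨Finset.mem_univ a, hk1⟩)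
  have hkmem : k ∈ {k : ℕ | f a ≤ k ∧ ((w a * ((T + k - 1) / k) : ℕ) : ℤ) < zstar} := by
    refine ⟨hfeas a, ?_⟩
    calc ((w a * ((T + k - 1) / k) : ℕ) : ℤ)
        ≤ ((w a * Dmax S a : ℕ) : ℤ) := by
          exact_mod_cast Nat.mul_le_mul_left _ hceil
      _ ≤ ((obj w S : ℕ) : ℤ) := by exact_mod_cast hle_obj
      _ < zstar := hobj
  exact ⟨⟨k, hkmem⟩, Nat.sInf_le hkmem⟩
end

section
/- Let A be a finite symbol set with weight function w : A → ℕ, w(a) ≥ 1 for all a, frequencies f : A → ℕ with f(a) ≥ 1 for all a, an integer z*, and an integer T ≥ 1. For each symbol a let N_a = {k ∈ ℕ : k ≥ f(a) and w(a) · ⌈T / k⌉ < z*}. If some N_a is empty, or if every N_a is nonempty and the sum over a ∈ A of min N_a is strictly greater than T, then there exists no feasible circular sequence S of length T with obj(S) < z*. -/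
variable {A : Type*}

lemma key_count {T : ℕ} [DecidableEq A] (S : Fin T → A) (a : A)
    (h1 : 1 ≤ count S a) : T ≤ count S a * Dmax S a := by
  obtain ⟨t0, ht0mem⟩ := Finset.card_pos.mp h1
  have ht0 : S t0 = a := (Finset.mem_filter.mp ht0mem).2
  have hT : 0 < T := t0.pos
  have hex : ∀ u : Fin T, ∃ e, ∃ t : Fin T, S t = a ∧ (t.val + e) % T = u.val := by
    intro u
    refine ⟨u.val + T - t0.val, t0, ht0, ?_⟩
    have h0 : t0.val + (u.val + T - t0.val) = u.val + T := by
      have := t0.isLt; omega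
    rw [h0, Nat.add_mod_right, Nat.mod_eq_of_lt u.isLt]
  have hemem : ∀ u : Fin T,
      sInf {e | ∃ t : Fin T, S t = a ∧ (t.val + e) % T = u.val} ∈
      {e | ∃ t : Fin T, S t = a ∧ (t.val + e) % T = u.val} := fun u => Nat.sInf_mem (hex u)
  set e : Fin T → ℕ := fun u => sInf {e | ∃ t : Fin T, S t = a ∧ (t.val + e) % T = u.val}
    with he
  have tspec : ∀ u : Fin T, ∃ t : Fin T, S t = a ∧ (t.val + e u) % T = u.val := fun u => hemem u
  choose t hta htu using tspec
  -- gap set nonempty at any occurrence position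
  have gmem : ∀ s : Fin T, S s = a →
      gap S a s ∈ {d : ℕ | 0 < d ∧ S ⟨(s.val + d) % T, Nat.mod_lt _ s.pos⟩ = a} := by
    intro s hs
    apply Nat.sInf_mem
    refine ⟨t0.val + T - s.val, ?_, ?_⟩
    · have := s.isLt; omega
    · have h0 : (s.val + (t0.val + T - s.val)) % T = t0.val := by
        have h1 : s.val + (t0.val + T - s.val) = t0.val + T := by have := s.isLt; omega
        rw [h1, Nat.add_mod_right, Nat.mod_eq_of_lt t0.isLt]
      have : (⟨(s.val + (t0.val + T - s.val)) % T, Nat.mod_lt _ s.pos⟩ : Fin T) = t0 :=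
        Fin.ext h0
      rw [this]; exact ht0
  have ebound : ∀ u : Fin T, e u < gap S a (t u) := by
    intro u
    by_contra hcon
    push_neg at hcon
    obtain ⟨hgpos, hgocc⟩ := gmem (t u) (hta u)
    set g := gap S a (t u) with hg
    set t' : Fin T := ⟨((t u).val + g) % T, Nat.mod_lt _ (t u).pos⟩ with ht'
    have hmem2 : (e u - g) ∈ {e | ∃ s : Fin T, S s = a ∧ (s.val + e) % T = u.val} := by
      refine ⟨t', hgocc, ?_⟩
      have : (t'.val + (e u - g)) % T = ((t u).val + g + (e u - g)) % T := by
        simp [ht', Nat.mod_add_mod]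
      rw [this]
      have h2 : (t u).val + g + (e u - g) = (t u).val + e u := by omega
      rw [h2]; exact htu u
    have h3 : e u ≤ e u - g := Nat.sInf_le hmem2
    omega
  have gDmax : ∀ u : Fin T, gap S a (t u) ≤ Dmax S a := by
    intro u
    exact Finset.le_sup (Finset.mem_filter.mpr ⟨Finset.mem_univ _, hta u⟩)
  -- injection
  have hinj : Set.InjOn (fun u => (t u, e u)) (Finset.univ : Finset (Fin T)) := by
    intro u _ u' _ huv
    have h1 : t u = t u' := congrArg Prod.fst huv
    have h2 : e u = e u' := congrArg Prod.snd huv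
    have := htu u
    have := htu u'
    apply Fin.ext
    rw [← htu u, ← htu u', h1, h2]
  have hcard := Finset.card_le_card_of_injOn (fun u => (t u, e u))
    (fun u _ => by
      refine Finset.mem_product.mpr ⟨Finset.mem_filter.mpr ⟨Finset.mem_univ _, hta u⟩, ?_⟩
      exact Finset.mem_range.mpr (lt_of_lt_of_le (ebound u) (gDmax u))
      : ∀ u ∈ (Finset.univ : Finset (Fin T)), (t u, e u) ∈
        (Finset.univ.filter fun s => S s = a) ×ˢ Finset.range (Dmax S a)) hinj
  simpa [count, Finset.card_product] using hcard

/-- if some `N_a` is empty, or all are nonempty and their minima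
sum to more than `T`, then no feasible sequence of length `T` improves on `z*`. -/
theorem no_improving_sequence [Fintype A] [DecidableEq A]
    (w f : A → ℕ) (hw : ∀ a, 1 ≤ w a) (hf : ∀ a, 1 ≤ f a) (zstar : ℤ)
    (T : ℕ) (hT : 1 ≤ T)
    (h : (∃ a : A,
            {k : ℕ | f a ≤ k ∧ ((w a * ((T + k - 1) / k) : ℕ) : ℤ) < zstar} = ∅) ∨
         ((∀ a : A,
            {k : ℕ | f a ≤ k ∧ ((w a * ((T + k - 1) / k) : ℕ) : ℤ) < zstar}.Nonempty) ∧
          T < ∑ a : A,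
            sInf {k : ℕ | f a ≤ k ∧ ((w a * ((T + k - 1) / k) : ℕ) : ℤ) < zstar})) :
    ¬ ∃ S : Fin T → A, (∀ a, f a ≤ count S a) ∧ (obj w S : ℤ) < zstar := by
  rintro ⟨S, hfeas, hobj⟩
  have hocc : ∀ a, 1 ≤ count S a := fun a => le_trans (hf a) (hfeas a)
  have hmemN : ∀ a : A, count S a ∈
      {k : ℕ | f a ≤ k ∧ ((w a * ((T + k - 1) / k) : ℕ) : ℤ) < zstar} := by
    intro a
    refine ⟨hfeas a, ?_⟩
    have h2 : (T + count S a - 1) / count S a ≤ Dmax S a := by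
      rw [Nat.div_le_iff_le_mul_add_pred (hocc a)]
      have hk := key_count S a (hocc a)
      set m := count S a * Dmax S a
      have := hocc a
      omega
    have h3 : w a * Dmax S a ≤ obj w S := by
      apply Finset.le_sup (f := fun a => w a * Dmax S a)
      exact Finset.mem_filter.mpr ⟨Finset.mem_univ a, hocc a⟩
    have h4 : w a * ((T + count S a - 1) / count S a) ≤ obj w S :=
      le_trans (Nat.mul_le_mul_left _ h2) h3
    exact lt_of_le_of_lt (by exact_mod_cast h4) hobj
  rcases h with ⟨a, ha⟩ | ⟨_, hsum⟩
  · have : count S a ∈ (∅ : Set ℕ) := ha ▸ hmemN a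
    exact this
  · have hle : ∀ a : A,
        sInf {k : ℕ | f a ≤ k ∧ ((w a * ((T + k - 1) / k) : ℕ) : ℤ) < zstar} ≤ count S a :=
      fun a => Nat.sInf_le (hmemN a)
    have hsum2 : (∑ a : A, sInf {k : ℕ | f a ≤ k ∧
        ((w a * ((T + k - 1) / k) : ℕ) : ℤ) < zstar}) ≤ ∑ a : A, count S a :=
      Finset.sum_le_sum fun a _ => hle a
    have hsum3 : ∑ a : A, count S a = T := by
      have := Finset.card_eq_sum_card_fiberwise
        (f := S) (s := (Finset.univ : Finset (Fin T))) (t := Finset.univ)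
        (fun x _ => Finset.mem_univ _)
      simpa [count] using this.symm
    omega
end

section
/- Let A = {a_1, …, a_n} with n ≥ 2 symbols, frequencies f : A → ℕ with f(a_i) ≥ 1 for all i, and T = Σ_i f(a_i). Define the block sequence S : Fin T → A by S(t) = a_i for the unique index i with Σ_{j < i} f(a_j) ≤ t < Σ_{j ≤ i} f(a_j). Then S is feasible (count_{a_i}(S) = f(a_i) for all i) and D_{a_i}(S) = T - f(a_i) + 1 for every i; consequently, for any weight function w with w(a) ≥ 1 for all a, obj(S) = max_i w(a_i) · (T - f(a_i) + 1). -/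
variable {A : Type*}

/-- the block sequence (symbols in index order, each `a_i` placed
`f a_i` times consecutively, with `T = Σ f`) is feasible, realizes
`D_{a_i}(S) = T - f a_i + 1` for every `i`, and has objective value
`max_i w a_i * (T - f a_i + 1)`. -/
theorem block_sequence_properties (n : ℕ) (hn : 2 ≤ n) (f : Fin n → ℕ)
    (hf : ∀ i, 1 ≤ f i) (T : ℕ) (hTdef : T = ∑ i, f i)
    (S : Fin T → Fin n)
    (hS : ∀ (t : Fin T) (i : Fin n), S t = i ↔
      (∑ j ∈ Finset.Iio i, f j ≤ t.val ∧ t.val < ∑ j ∈ Finset.Iic i, f j)) :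
    (∀ i, count S i = f i) ∧
    (∀ i, Dmax S i = T - f i + 1) ∧
    (∀ w : Fin n → ℕ, (∀ i, 1 ≤ w i) →
      obj w S = Finset.univ.sup fun i => w i * (T - f i + 1)) := by
  classical
  -- abbreviations
  set P : Fin n → ℕ := fun i => ∑ j ∈ Finset.Iio i, f j with hP
  set Q : Fin n → ℕ := fun i => ∑ j ∈ Finset.Iic i, f j with hQ
  have hQP : ∀ i, Q i = P i + f i := by
    intro i
    simp only [hQ, hP]
    rw [← Finset.Iio_insert, Finset.sum_insert (by simp)]
    ring
  have hQT : ∀ i, Q i ≤ T := by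
    intro i
    rw [hTdef]
    exact Finset.sum_le_sum_of_subset (Finset.subset_univ _)
  have hS' : ∀ (t : Fin T) (i : Fin n), S t = i ↔ (P i ≤ t.val ∧ t.val < Q i) := hS
  -- Part 1: counts
  have hcount : ∀ i, count S i = f i := by
    intro i
    unfold count
    have he : (Finset.univ.filter fun t : Fin T => S t = i)
        = Finset.univ.filter (fun t : Fin T => P i ≤ t.val ∧ t.val < Q i) := by
      apply Finset.filter_congr
      intro t _
      simpa using hS' t i
    rw [he]
    have hcard : (Finset.univ.filter (fun t : Fin T => P i ≤ t.val ∧ t.val < Q i)).card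
        = (Finset.Ico (P i) (Q i)).card := by
      apply Finset.card_bij (fun t _ => t.val)
      · intro t ht
        simp only [Finset.mem_filter, Finset.mem_univ, true_and] at ht
        simp [Finset.mem_Ico, ht.1, ht.2]
      · intro t1 h1 t2 h2 h
        exact Fin.val_injective h
      · intro m hm
        simp only [Finset.mem_Ico] at hm
        exact ⟨⟨m, lt_of_lt_of_le hm.2 (hQT i)⟩, by simp [hm.1, hm.2], rfl⟩
    rw [hcard, Nat.card_Ico]
    have := hQP i
    omega
  -- Part 2: Dmax
  have hDmax : ∀ i, Dmax S i = T - f i + 1 := by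
    intro i
    have h1fi : 1 ≤ f i := hf i
    have hQPi := hQP i
    have hQle : Q i ≤ T := hQT i
    have hQlt : Q i - 1 < T := by omega
    have hPlt : P i < T := by omega
    set tl : Fin T := ⟨Q i - 1, hQlt⟩ with htl_def
    have htl : S tl = i := by
      rw [hS' tl i]
      constructor <;> simp only [htl_def] <;> omega
    -- the gap at the last position of the block
    have hd0mem : (T - f i + 1) ∈ {d : ℕ | 0 < d ∧
        S ⟨(tl.val + d) % T, Nat.mod_lt _ tl.pos⟩ = i} := by
      refine ⟨by omega, ?_⟩
      have hval : (tl.val + (T - f i + 1)) % T = P i := by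
        have : tl.val + (T - f i + 1) = P i + T := by simp only [htl_def]; omega
        rw [this, Nat.add_mod_right, Nat.mod_eq_of_lt hPlt]
      have heq : (⟨(tl.val + (T - f i + 1)) % T, Nat.mod_lt _ tl.pos⟩ : Fin T)
          = ⟨P i, hPlt⟩ := Fin.ext hval
      rw [heq, hS']
      constructor <;> simp <;> omega
    have hlb : ∀ d : ℕ, 0 < d → d < T - f i + 1 →
        S ⟨(tl.val + d) % T, Nat.mod_lt _ tl.pos⟩ ≠ i := by
      intro d hd hdlt hcon
      rw [hS'] at hcon
      simp only [Fin.val_mk] at hcon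
      rcases lt_or_ge (tl.val + d) T with hc | hc
      · rw [Nat.mod_eq_of_lt hc] at hcon
        simp only [htl_def] at hcon hc
        omega
      · have h2T : tl.val + d < 2 * T := by simp only [htl_def]; omega
        have : (tl.val + d) % T = tl.val + d - T := by
          rw [Nat.mod_eq_sub_mod hc, Nat.mod_eq_of_lt (by omega)]
        rw [this] at hcon
        simp only [htl_def, Fin.val_mk] at hcon hc
        omega
    have hgap_tl : gap S i tl = T - f i + 1 := by
      unfold gap
      apply le_antisymm (Nat.sInf_le hd0mem)
      by_contra h
      push_neg at h
      have hne : {d : ℕ | 0 < d ∧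
          S ⟨(tl.val + d) % T, Nat.mod_lt _ tl.pos⟩ = i}.Nonempty := ⟨_, hd0mem⟩
      have hmem := Nat.sInf_mem hne
      exact hlb _ hmem.1 h hmem.2
    have hgap_one : ∀ t : Fin T, S t = i → t ≠ tl → gap S i t = 1 := by
      intro t ht hne
      have hb := (hS' t i).1 ht
      have htlt : t.val < Q i - 1 := by
        have hne' : t.val ≠ Q i - 1 := fun h' => hne (Fin.ext h')
        omega
      have hmod : (t.val + 1) % T = t.val + 1 := Nat.mod_eq_of_lt (by omega)
      have h1mem : (1 : ℕ) ∈ {d : ℕ | 0 < d ∧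
          S ⟨(t.val + d) % T, Nat.mod_lt _ t.pos⟩ = i} := by
        refine ⟨one_pos, ?_⟩
        have heq : (⟨(t.val + 1) % T, Nat.mod_lt _ t.pos⟩ : Fin T)
            = ⟨t.val + 1, by omega⟩ := Fin.ext hmod
        rw [heq, hS']
        constructor <;> simp <;> omega
      unfold gap
      have hle := Nat.sInf_le h1mem
      have hpos := (Nat.sInf_mem ⟨1, h1mem⟩).1
      omega
    unfold Dmax
    apply le_antisymm
    · apply Finset.sup_le
      intro t ht
      simp only [Finset.mem_filter, Finset.mem_univ, true_and] at ht
      by_cases hteq : t = tl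
      · rw [hteq, hgap_tl]
      · rw [hgap_one t ht hteq]
        omega
    · have htl_mem : tl ∈ Finset.univ.filter fun t : Fin T => S t = i := by
        simp [htl]
      calc T - f i + 1 = gap S i tl := hgap_tl.symm
        _ ≤ _ := Finset.le_sup htl_mem
  refine ⟨hcount, hDmax, ?_⟩
  intro w hw
  unfold obj
  have hfil : (Finset.univ.filter fun a : Fin n => 1 ≤ count S a) = Finset.univ := by
    apply Finset.filter_true_of_mem
    intro a _
    rw [hcount]
    exact hf a
  rw [hfil]
  apply Finset.sup_congr rfl
  intro i _
  rw [hDmax]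
end

section
/- Let S be a circular sequence of length T ≥ 1 over a finite symbol set A with weight function w : A → ℕ, w(a) ≥ 1 for all a, in which every symbol of A occurs. Then obj(S) ≥ max over a ∈ A of w(a) · ⌈T / count_a(S)⌉. -/
variable {A : Type*}

open Fin.CommRing

lemma fin_mk_eq_add {n : ℕ} (t : Fin (n+1)) (d : ℕ) :
    (⟨(t.val + d) % (n+1), Nat.mod_lt _ t.pos⟩ : Fin (n+1)) = t + (d : Fin (n+1)) := by
  ext
  simp [Fin.add_def, Fin.val_natCast, Nat.add_mod_mod]

lemma gap_eq {n : ℕ} (S : Fin (n+1) → A) (a : A) (t : Fin (n+1)) :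
    gap S a t = sInf {d : ℕ | 0 < d ∧ S (t + (d : Fin (n+1))) = a} := by
  unfold gap
  congr 1
  ext d
  simp only [Set.mem_setOf_eq, fin_mk_eq_add]

lemma key_bound {n : ℕ} [DecidableEq A] (S : Fin (n+1) → A) (a : A)
    (hocc : 1 ≤ count S a) : n + 1 ≤ count S a * Dmax S a := by
  classical
  obtain ⟨q, hq⟩ : ∃ q, S q = a := by
    have : (Finset.univ.filter fun t => S t = a).Nonempty :=
      Finset.card_pos.mp hocc
    obtain ⟨q, hq⟩ := this
    exact ⟨q, (Finset.mem_filter.mp hq).2⟩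
  -- back distance
  set B : Fin (n+1) → Set ℕ := fun t => {d | 0 < d ∧ S (t - (d : Fin (n+1))) = a} with hB
  have hBne : ∀ t, (B t).Nonempty := by
    intro t
    by_cases h : t = q
    · refine ⟨n+1, Nat.succ_pos n, ?_⟩
      simp [h, hq, Fin.natCast_self]
    · refine ⟨(t - q).val, ?_, ?_⟩
      · have : t - q ≠ 0 := sub_ne_zero.mpr h
        have : (t - q).val ≠ 0 := fun hv => this (Fin.ext hv)
        omega
      · simp only [Fin.cast_val_eq_self]
        rw [sub_sub_cancel]
        exact hq
  set b : Fin (n+1) → ℕ := fun t => sInf (B t) with hbdef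
  have hbmem : ∀ t, b t ∈ B t := fun t => Nat.sInf_mem (hBne t)
  set p : Fin (n+1) → Fin (n+1) := fun t => t - ((b t : ℕ) : Fin (n+1)) with hpdef
  have hpa : ∀ t, S (p t) = a := fun t => (hbmem t).2
  have hbpos : ∀ t, 0 < b t := fun t => (hbmem t).1
  -- gap at p t
  have hgapmem : ∀ t, gap S a (p t) ∈ {d : ℕ | 0 < d ∧ S (p t + (d : Fin (n+1))) = a} := by
    intro t
    rw [gap_eq]
    apply Nat.sInf_mem
    refine ⟨n+1, Nat.succ_pos n, ?_⟩
    simp [Fin.natCast_self, hpa t]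
  have hble : ∀ t, b t ≤ gap S a (p t) := by
    intro t
    by_contra hlt
    push_neg at hlt
    set g := gap S a (p t) with hgdef
    have hg1 : 0 < g := (hgapmem t).1
    have hg2 : S (p t + (g : Fin (n+1))) = a := (hgapmem t).2
    have hdmem : b t - g ∈ B t := by
      constructor
      · omega
      · have hcast : ((b t - g : ℕ) : Fin (n+1)) = ((b t : ℕ) : Fin (n+1)) - (g : Fin (n+1)) := by
          push_cast [Nat.cast_sub hlt.le]
          ring
        rw [hcast]
        have : t - (((b t : ℕ) : Fin (n+1)) - (g : Fin (n+1))) = p t + (g : Fin (n+1)) := by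
          rw [hpdef]
          ring
        rw [this]
        exact hg2
    have h3 : b t ≤ b t - g := Nat.sInf_le hdmem
    omega
  have hgapD : ∀ t, gap S a (p t) ≤ Dmax S a := by
    intro t
    apply Finset.le_sup
    simp [hpa t]
  have hbD : ∀ t, b t ≤ Dmax S a := fun t => le_trans (hble t) (hgapD t)
  -- injection
  set P := Finset.univ.filter fun t => S t = a with hP
  have hcard := Finset.card_le_card_of_injOn (f := fun t => (p t, b t))
    (s := (Finset.univ : Finset (Fin (n+1))))
    (t := P ×ˢ Finset.Icc 1 (Dmax S a))
    (by
      intro t _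
      refine Finset.mem_product.mpr ⟨?_, ?_⟩
      · simp [hP, hpa t]
      · exact Finset.mem_Icc.mpr ⟨hbpos t, hbD t⟩)
    (by
      intro t _ t' _ h
      have h1 : p t = p t' := (Prod.mk.injEq _ _ _ _ ▸ h).1
      have h2 : b t = b t' := (Prod.mk.injEq _ _ _ _ ▸ h).2
      have ht : p t + ((b t : ℕ) : Fin (n+1)) = t := by rw [hpdef]; ring
      have ht' : p t' + ((b t' : ℕ) : Fin (n+1)) = t' := by rw [hpdef]; ring
      rw [← ht, ← ht', h1, h2])
  rw [Finset.card_univ, Fintype.card_fin, Finset.card_product, Nat.card_Icc] at hcard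
  simpa [count] using hcard

/-- lower bound on the objective value in terms of the counts. -/
theorem obj_ge_ceil_bound {T : ℕ} [Fintype A] [DecidableEq A] (hT : 1 ≤ T)
    (S : Fin T → A) (w : A → ℕ) (hw : ∀ a, 1 ≤ w a)
    (hocc : ∀ a : A, 1 ≤ count S a) :
    (Finset.univ.sup fun a => w a * ((T + count S a - 1) / count S a)) ≤ obj w S := by
  obtain ⟨n, rfl⟩ : ∃ n, T = n + 1 := ⟨T - 1, by omega⟩
  apply Finset.sup_le
  intro a _
  have hkey := key_bound S a (hocc a)
  have hc1 : 1 ≤ count S a := hocc a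
  have hdiv : (n + 1 + count S a - 1) / count S a ≤ Dmax S a := by
    have hlt : (n + 1 + count S a - 1) / count S a < Dmax S a + 1 := by
      rw [Nat.div_lt_iff_lt_mul (by omega)]
      have h1 : (Dmax S a + 1) * count S a = count S a * Dmax S a + count S a := by ring
      omega
    omega
  calc w a * ((n + 1 + count S a - 1) / count S a) ≤ w a * Dmax S a :=
        Nat.mul_le_mul_left _ hdiv
    _ ≤ obj w S := Finset.le_sup (f := fun a => w a * Dmax S a) (by simp [hocc a])
end
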